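/- Let G be a connected graph with a perfect matching M. Then the anti-forcing number af(G, M) of M is at most the cyclomatic number |E(G)| − |V(G)| + 1 of G. -/

import Mathlib

open scoped Classical

variable {V : Type*} [Fintype V] [DecidableEq V]

/-- `M` is a perfect matching of `G`: a set of edges of `G` such that every
vertex lies in exactly one edge of `M`. -/
def IsPM (G : SimpleGraph V) (M : Set (Sym2 V)) : Prop :=
  M ⊆ G.edgeSet ∧ ∀ v : V, ∃! e, e ∈ M ∧ v ∈ e

/-- `M` is the unique perfect matching of `G`. -/
def IsUniquePM (G : SimpleGraph V) (M : Set (Sym2 V)) : Prop :=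
  IsPM G M ∧ ∀ M', IsPM G M' → M' = M

/-- A closed walk `c` is an `M`-alternating cycle: it is a cycle of even length
whose edges lie alternately in `M` and outside `M`. -/
def IsAltCycle {G : SimpleGraph V} (M : Set (Sym2 V)) {v : V} (c : G.Walk v v) : Prop :=
  c.IsCycle ∧ Even c.edges.length ∧
    ((∀ i (h : i < c.edges.length), c.edges.get ⟨i, h⟩ ∈ M ↔ Even i) ∨
     (∀ i (h : i < c.edges.length), c.edges.get ⟨i, h⟩ ∈ M ↔ ¬ Even i))

/-- `S` is an anti-forcing set of the perfect matching `M` of `G`: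
`S` consists of edges of `G` not in `M` and `M` is the unique perfect matching
of `G - S`. -/
def IsAntiForcingSet (G : SimpleGraph V) (M S : Set (Sym2 V)) : Prop :=
  S ⊆ G.edgeSet \ M ∧ IsUniquePM (G.deleteEdges S) M

/-- The anti-forcing number of a perfect matching `M` of `G`. -/
noncomputable def af (G : SimpleGraph V) (M : Set (Sym2 V)) : ℕ :=
  sInf {n | ∃ S : Finset (Sym2 V), S.card = n ∧ IsAntiForcingSet G M ↑S}

namespace AFaux

/-- Walk built from a ℕ-indexed sequence of adjacent vertices. -/
def walkOf (H : SimpleGraph V) (a : ℕ → V) (hadj : ∀ n, H.Adj (a n) (a (n + 1))) :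
    (s k : ℕ) → H.Walk (a s) (a (s + k))
  | _, 0 => SimpleGraph.Walk.nil
  | s, (k + 1) =>
    SimpleGraph.Walk.cons (hadj s)
      ((walkOf H a hadj (s + 1) k).copy rfl (congrArg a (by omega)))

lemma walkOf_support (H : SimpleGraph V) (a : ℕ → V) (hadj : ∀ n, H.Adj (a n) (a (n + 1)))
    (s k : ℕ) :
    (walkOf H a hadj s k).support = (List.range (k + 1)).map (fun t => a (s + t)) := by
  induction k generalizing s with
  | zero => 
    simp only [walkOf, SimpleGraph.Walk.support_nil]
    rfl
  | succ k ih =>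
    rw [walkOf, SimpleGraph.Walk.support_cons, SimpleGraph.Walk.support_copy, ih]
    conv_rhs => rw [List.range_succ_eq_map]
    simp only [List.map_cons, List.map_map]
    refine congrArg₂ _ rfl ?_
    apply List.map_congr_left
    intro t _
    simp only [Function.comp_apply]
    congr 1
    omega

lemma walkOf_length (H : SimpleGraph V) (a : ℕ → V) (hadj : ∀ n, H.Adj (a n) (a (n + 1)))
    (s k : ℕ) : (walkOf H a hadj s k).length = k := by
  induction k generalizing s with
  | zero => simp [walkOf]
  | succ k ih => rw [walkOf]; simp [ih]

lemma no_nonbacktracking (H : SimpleGraph V) (hac : H.IsAcyclic) (a : ℕ → V)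
    (hadj : ∀ n, H.Adj (a n) (a (n + 1))) (hnb : ∀ n, a (n + 2) ≠ a n) : False := by
  obtain ⟨m, n, hmn, hamn⟩ := Finite.exists_ne_map_eq_of_infinite a
  have hQ : ∃ j, ∃ i, i < j ∧ a i = a j := by
    rcases lt_or_gt_of_ne hmn with h | h
    · exact ⟨n, m, h, hamn⟩
    · exact ⟨m, n, h, hamn.symm⟩
  classical
  set J := Nat.find hQ with hJdef
  obtain ⟨i, hiJ, haiJ⟩ := Nat.find_spec hQ
  have injA : ∀ k l, k < l → l < J → a k ≠ a l := by
    intro k l hkl hlJ he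
    exact Nat.find_min hQ hlJ ⟨k, hkl, he⟩
  have hJ3 : i + 3 ≤ J := by
    rcases Nat.lt_or_ge J (i + 3) with h | h
    · have h2 : J = i + 1 ∨ J = i + 2 := by omega
      rcases h2 with h2 | h2
      · have : a i = a (i + 1) := by rw [← h2, hJdef]; exact haiJ
        exact absurd this (hadj i).ne
      · have : a i = a (i + 2) := by rw [← h2, hJdef]; exact haiJ
        exact absurd this.symm (hnb i)
    · exact h
  set k := J - (i + 1) with hk
  have hik : i + 1 + k = J := by omega
  have p0 := walkOf H a hadj (i + 1) k
  have hcast : a (i + 1 + k) = a i := by rw [hik]; exact haiJ.symm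
  set p : H.Walk (a (i + 1)) (a i) := (walkOf H a hadj (i + 1) k).copy rfl hcast with hp
  have hsup : p.support = (List.range (k + 1)).map (fun t => a (i + 1 + t)) := by
    rw [hp, SimpleGraph.Walk.support_copy, walkOf_support]
  have core : ∀ t u, t < u → u ≤ k → a (i + 1 + t) ≠ a (i + 1 + u) := by
    intro t u htu huk he
    rcases Nat.lt_or_ge (i + 1 + u) J with h | h
    · exact injA (i + 1 + t) (i + 1 + u) (by omega) h he
    · have hu : i + 1 + u = J := by omega
      rw [hu, ← haiJ] at he
      exact injA i (i + 1 + t) (by omega) (by omega) he.symm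
  have hpath : p.IsPath := by
    rw [SimpleGraph.Walk.isPath_def, hsup]
    refine List.Nodup.map_on ?_ List.nodup_range
    intro t ht u hu he
    simp only [List.mem_range] at ht hu
    rcases lt_trichotomy t u with h | h | h
    · exact absurd he (core t u h (by omega))
    · exact h
    · exact absurd he.symm (core u t h (by omega))
  have hq := SimpleGraph.Path.singleton ((hadj i).symm)
  have := hac.path_unique ⟨p, hpath⟩ (SimpleGraph.Path.singleton ((hadj i).symm))
  have hlen : p.length = 1 := by
    have := congrArg (fun r => r.val.length) this
    simpa [SimpleGraph.Path.singleton] using this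
  rw [hp, SimpleGraph.Walk.length_copy, walkOf_length] at hlen
  omega

end AFaux

namespace AFaux

lemma partner (M : Set (Sym2 V)) (hMv : ∀ v : V, ∃! e, e ∈ M ∧ v ∈ e) :
    ∀ v : V, ∃ w, s(v, w) ∈ M ∧ ∀ x, s(v, x) ∈ M → x = w := by
  intro v
  obtain ⟨e, ⟨heM, hve⟩, hu⟩ := hMv v
  obtain ⟨w, rfl⟩ := Sym2.mem_iff_exists.mp hve
  exact ⟨w, heM, fun x hx => Sym2.congr_right.mp (hu _ ⟨hx, Sym2.mem_mk_left v x⟩)⟩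

lemma unique_pm_of_acyclic (H : SimpleGraph V) (hac : H.IsAcyclic) (M M' : Set (Sym2 V))
    (hMe : M ⊆ H.edgeSet) (hMv : ∀ v : V, ∃! e, e ∈ M ∧ v ∈ e)
    (hMe' : M' ⊆ H.edgeSet) (hMv' : ∀ v : V, ∃! e, e ∈ M' ∧ v ∈ e) : M' = M := by
  choose f hf hfu using partner M hMv
  choose g hg hgu using partner M' hMv'
  have hfadj : ∀ v, H.Adj v (f v) := fun v => (H.mem_edgeSet).mp (hMe (hf v))
  have hgadj : ∀ v, H.Adj v (g v) := fun v => (H.mem_edgeSet).mp (hMe' (hg v))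
  have hfinv : ∀ v, f (f v) = v := by
    intro v
    exact (hfu (f v) v (by rw [Sym2.eq_swap]; exact hf v)).symm
  have hginv : ∀ v, g (g v) = v := by
    intro v
    exact (hgu (g v) v (by rw [Sym2.eq_swap]; exact hg v)).symm
  by_cases hfg : ∀ v, f v = g v
  · ext e
    induction e using Sym2.ind with
    | _ x y =>
      constructor
      · intro h
        have := hgu x y h
        rw [this, ← hfg x]
        exact hf x
      · intro h
        have := hfu x y h
        rw [this, hfg x]
        exact hg x
  · push_neg at hfg
    obtain ⟨v₀, hv₀⟩ := hfg
    exfalso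
    set a : ℕ → V := fun n => Nat.rec v₀ (fun n x => if Even n then g x else f x) n with ha
    have ha0 : a 0 = v₀ := rfl
    have hastep : ∀ n, a (n + 1) = if Even n then g (a n) else f (a n) := fun n => rfl
    have hinv : ∀ n, f (a n) ≠ g (a n) := by
      intro n
      induction n with
      | zero => exact hv₀
      | succ n ih =>
        by_cases hn : Even n
        · have h1 : a (n + 1) = g (a n) := by rw [hastep n, if_pos hn]
          intro hcon
          apply ih
          have h2 : g (a (n + 1)) = a n := by rw [h1, hginv]
          rw [h2] at hcon
          have : f (a n) = a (n + 1) := by rw [← hcon, hfinv]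
          rw [this, h1]
        · have h1 : a (n + 1) = f (a n) := by rw [hastep n, if_neg hn]
          intro hcon
          apply ih
          have h2 : f (a (n + 1)) = a n := by rw [h1, hfinv]
          rw [h2] at hcon
          have : g (a n) = a (n + 1) := by rw [hcon, hginv]
          rw [this, h1]
    have hadj : ∀ n, H.Adj (a n) (a (n + 1)) := by
      intro n
      rw [hastep n]
      by_cases hn : Even n
      · rw [if_pos hn]; exact hgadj _
      · rw [if_neg hn]; exact hfadj _
    have hnb : ∀ n, a (n + 2) ≠ a n := by
      intro n
      by_cases hn : Even n
      · have h1 : a (n + 1) = g (a n) := by rw [hastep n, if_pos hn]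
        have h2 : a (n + 2) = f (a (n + 1)) := by
          rw [hastep (n + 1), if_neg (by simp [Nat.even_add_one, hn])]
        intro hcon
        apply hinv n
        rw [h2] at hcon
        have : a (n + 1) = f (a n) := by rw [← hcon, hfinv]
        rw [← this, h1]
      · have h1 : a (n + 1) = f (a n) := by rw [hastep n, if_neg hn]
        have h2 : a (n + 2) = g (a (n + 1)) := by
          rw [hastep (n + 1), if_pos (by simpa using Nat.even_add_one.mpr hn)]
        intro hcon
        apply hinv n
        rw [h2] at hcon
        have : a (n + 1) = g (a n) := by rw [← hcon, hginv]
        rw [← this, h1]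
    exact no_nonbacktracking H hac a hadj hnb

end AFaux

namespace AFaux

lemma matching_acyclic (H : SimpleGraph V) (M : Set (Sym2 V)) (hsub : H.edgeSet ⊆ M)
    (hMv : ∀ v : V, ∃! e, e ∈ M ∧ v ∈ e) : H.IsAcyclic := by
  intro v c hc
  cases c with
  | nil => exact absurd rfl hc.ne_nil
  | @cons _ w _ h p =>
    obtain ⟨x, q, h', hcq⟩ := SimpleGraph.Walk.exists_cons_eq_concat h p
    let c := SimpleGraph.Walk.cons h p
    have hed1 : c.edges = s(v, w) :: p.edges := rfl
    have hed2 : c.edges = q.edges ++ [s(x, v)] := by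
      show (SimpleGraph.Walk.cons h p).edges = _
      rw [hcq, SimpleGraph.Walk.edges_concat, List.concat_eq_append]
    have h3 : 3 ≤ c.edges.length := by
      rw [SimpleGraph.Walk.length_edges]; exact hc.three_le_length
    have hmx : s(v, w) ∈ M := hsub (c.edges_subset_edgeSet (hed1 ▸ List.mem_cons_self))
    have hmy : s(x, v) ∈ M := by
      refine hsub (c.edges_subset_edgeSet ?_)
      rw [hed2]
      simp
    obtain ⟨e, -, hu⟩ := hMv v
    have hxy : s(v, w) = s(x, v) :=
      (hu _ ⟨hmx, Sym2.mem_mk_left _ _⟩).trans (hu _ ⟨hmy, Sym2.mem_mk_right _ _⟩).symm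
    have hql : c.edges.length = q.edges.length + 1 := by rw [hed2]; simp
    have h0 : c.edges[0]'(by omega) = s(v, w) :=
      (List.getElem_of_eq hed1 _).trans rfl
    have hlast : c.edges[q.edges.length]'(by omega) = s(x, v) := by
      exact (List.getElem_of_eq hed2 _).trans (List.getElem_concat_length rfl _)
    have hnd : c.edges.Nodup := hc.edges_nodup
    have h00 : c.edges[0]'(by omega) = c.edges[q.edges.length]'(by omega) :=
      h0.trans (hxy.trans hlast.symm)
    have := hnd.getElem_inj_iff.mp h00
    omega

end AFaux


/-- For a connected graph `G` with a perfect matching `M`,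
`af(G, M) ≤ |E(G)| - |V(G)| + 1` (the cyclomatic number). -/
theorem statement3 (G : SimpleGraph V) (hG : G.Connected)
    (M : Set (Sym2 V)) (hM : IsPM G M) :
    (af G M : ℤ) ≤ (G.edgeSet.ncard : ℤ) - Fintype.card V + 1 := by
  classical
  obtain ⟨hMe, hMv⟩ := hM
  have hMfin : M.Finite := Set.Finite.subset (Set.toFinite _) hMe
  set MF : Finset (Sym2 V) := hMfin.toFinset with hMF
  have hMFc : (MF : Set (Sym2 V)) = M := hMfin.coe_toFinset
  set P : Finset (Sym2 V) → Prop := fun T =>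
    MF ⊆ T ∧ T ⊆ G.edgeFinset ∧ (G.deleteEdges ↑(G.edgeFinset \ T)).IsAcyclic with hP
  have hedge : ∀ T : Finset (Sym2 V), T ⊆ G.edgeFinset →
      (G.deleteEdges ↑(G.edgeFinset \ T)).edgeSet = ↑T := by
    intro T hT
    rw [SimpleGraph.edgeSet_deleteEdges]
    ext e
    simp only [Set.mem_diff, Finset.coe_sdiff, SimpleGraph.coe_edgeFinset, Set.mem_diff,
      Finset.mem_coe]
    constructor
    · rintro ⟨he, hne⟩
      by_contra hc
      exact hne ⟨he, hc⟩
    · intro he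
      exact ⟨SimpleGraph.mem_edgeFinset.mp (hT he), fun hh => hh.2 he⟩
  have adjT : ∀ (T : Finset (Sym2 V)) (x y : V),
      (G.deleteEdges ↑(G.edgeFinset \ T)).Adj x y ↔ G.Adj x y ∧ s(x, y) ∈ T := by
    intro T x y
    simp only [SimpleGraph.deleteEdges_adj, Finset.mem_coe, Finset.mem_sdiff,
      SimpleGraph.mem_edgeFinset, SimpleGraph.mem_edgeSet]
    tauto
  have hPM : P MF := by
    refine ⟨subset_rfl, ?_, ?_⟩
    · intro e he
      rw [SimpleGraph.mem_edgeFinset]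
      exact hMe (hMFc ▸ (Finset.mem_coe.mpr he))
    · refine AFaux.matching_acyclic _ M ?_ hMv
      rw [hedge MF (fun e he => SimpleGraph.mem_edgeFinset.mpr (hMe (hMFc ▸ (Finset.mem_coe.mpr he)))), hMFc]
  obtain ⟨T, hT𝒮, hTmax⟩ :=
    Finset.exists_max_image (Finset.univ.filter P) Finset.card ⟨MF, Finset.mem_filter.mpr ⟨Finset.mem_univ _, hPM⟩⟩
  rw [Finset.mem_filter] at hT𝒮
  obtain ⟨hMT, hTE, hHac⟩ := hT𝒮.2
  set S : Finset (Sym2 V) := G.edgeFinset \ T with hS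
  set H : SimpleGraph V := G.deleteEdges ↑S with hH
  have hHedge : H.edgeSet = ↑T := hedge T hTE
  have hMsubH : M ⊆ H.edgeSet := by
    rw [hHedge, ← hMFc]
    exact Finset.coe_subset.mpr hMT
  have hpre : H.Preconnected := by
    by_contra hnc
    simp only [SimpleGraph.Preconnected, not_forall] at hnc
    obtain ⟨u, v, hnr⟩ := hnc
    have cross : ∀ {x y : V} (p : G.Walk x y), H.Reachable u x → ¬H.Reachable u y →
        ∃ a b, G.Adj a b ∧ H.Reachable u a ∧ ¬H.Reachable u b := by
      intro x y p
      induction p with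
      | nil => exact fun hx hy => absurd hx hy
      | @cons x x' y hadj q ih =>
        intro hx hy
        by_cases hmid : H.Reachable u x'
        · exact ih hmid hy
        · exact ⟨x, x', hadj, hx, hmid⟩
    obtain ⟨w⟩ := hG.preconnected u v
    obtain ⟨a, b, hab, hua, hub⟩ := cross w (SimpleGraph.Reachable.refl u) hnr
    have heT : s(a, b) ∉ T := by
      intro hc
      exact hub (hua.trans ((adjT T a b).mpr ⟨hab, hc⟩).reachable)
    set T' : Finset (Sym2 V) := insert s(a, b) T with hT'
    have hT'E : T' ⊆ G.edgeFinset := by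
      intro e he
      rcases Finset.mem_insert.mp he with rfl | he
      · exact SimpleGraph.mem_edgeFinset.mpr hab
      · exact hTE he
    have hPT' : P T' := by
      refine ⟨hMT.trans (Finset.subset_insert _ _), hT'E, ?_⟩
      intro z c hcyc
      by_cases hec : s(a, b) ∈ c.edges
      · have hcyc2 := (SimpleGraph.adj_and_reachable_delete_edges_iff_exists_cycle
          (G := G.deleteEdges ↑(G.edgeFinset \ T'))).mpr ⟨z, c, hcyc, hec⟩
        obtain ⟨-, hr⟩ := hcyc2
        have hle : (G.deleteEdges ↑(G.edgeFinset \ T') \ SimpleGraph.fromEdgeSet {s(a, b)}) ≤ H := by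
          intro x y hxy
          rw [SimpleGraph.sdiff_adj] at hxy
          obtain ⟨hxy1, hxy2⟩ := hxy
          rw [adjT T'] at hxy1
          obtain ⟨hg, hmem⟩ := hxy1
          have hne : s(x, y) ≠ s(a, b) := by
            intro hh
            exact hxy2 ((SimpleGraph.fromEdgeSet_adj _).mpr ⟨by rw [hh]; rfl, hg.ne⟩)
          exact (adjT T x y).mpr ⟨hg, by
            rcases Finset.mem_insert.mp hmem with h | h
            · exact absurd h hne
            · exact h⟩
        exact hub (hua.trans (hr.mono hle))
      · have hsubc : ∀ e ∈ c.edges, e ∈ H.edgeSet := by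
          intro e he
          have h1 : e ∈ (G.deleteEdges ↑(G.edgeFinset \ T')).edgeSet := c.edges_subset_edgeSet he
          rw [hedge T' hT'E] at h1
          have hne : e ≠ s(a, b) := fun hh => hec (hh ▸ he)
          rw [hHedge]
          rcases Finset.mem_insert.mp (Finset.mem_coe.mp h1) with h | h
          · exact absurd h hne
          · exact Finset.mem_coe.mpr h
        exact hHac (c.transfer H hsubc) (hcyc.transfer hsubc)
    have hmem' : T' ∈ Finset.univ.filter P := by
      rw [Finset.mem_filter]
      exact ⟨Finset.mem_univ _, hPT'⟩
    have hcard := hTmax T' hmem'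
    rw [Finset.card_insert_of_notMem heT] at hcard
    omega
  haveI := hG.nonempty
  have hHconn : H.Connected := ⟨hpre⟩
  have htree : H.IsTree := ⟨hHconn, hHac⟩
  have hcard := htree.card_edgeFinset
  have hTeq : H.edgeFinset = T := by
    apply Finset.coe_injective
    rw [SimpleGraph.coe_edgeFinset, hHedge]
  rw [hTeq] at hcard
  have hAFS : IsAntiForcingSet G M ↑S := by
    constructor
    · intro e he
      rw [Finset.mem_coe, hS, Finset.mem_sdiff] at he
      refine ⟨SimpleGraph.mem_edgeFinset.mp he.1, ?_⟩
      intro hc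
      exact he.2 (hMT (by rw [hMF, Set.Finite.mem_toFinset]; exact hc))
    · constructor
      · exact ⟨hMsubH, hMv⟩
      · intro M' hM'
        exact AFaux.unique_pm_of_acyclic H hHac M M' hMsubH hMv hM'.1 hM'.2
  have haf : af G M ≤ S.card := Nat.sInf_le ⟨S, rfl, hAFS⟩
  have hSc : S.card = G.edgeFinset.card - T.card := Finset.card_sdiff_of_subset hTE
  have hTle : T.card ≤ G.edgeFinset.card := Finset.card_le_card hTE
  have hm : G.edgeSet.ncard = G.edgeFinset.card := by
    rw [← SimpleGraph.coe_edgeFinset, Set.ncard_coe_finset]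
  rw [hm]
  omega
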